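/- Let f₀, …, fₙ : ℤ → ℝ, let m₀ ∈ ℤ and p ≥ 0 a natural number. Suppose (i) Δ(m) = 0 for every integer m with m₀ ≤ m ≤ m₀ + p, and (ii) for every such m, at least one of the cofactors C₀(m), …, Cₙ(m) is nonzero. Then there exist real constants A₀, …, Aₙ, not all zero, such that A₀·f₀(m) + A₁·f₁(m) + ⋯ + Aₙ·fₙ(m) = 0 for every integer m with m₀ ≤ m ≤ m₀ + p + n. -/

import Mathlib

open Matrix Module

/-- Kernel of a full-rank n×(n+1) matrix is one-dimensional. -/
lemma kernel_prop {n : ℕ} (B : Matrix (Fin n) (Fin (n + 1)) ℝ) (μ₀ : Fin (n + 1))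
    (hdet : (B.submatrix id μ₀.succAbove).det ≠ 0)
    (v w : Fin (n + 1) → ℝ) (hv : B.mulVec v = 0) (hw : B.mulVec w = 0) (hw0 : w ≠ 0) :
    ∃ c : ℝ, v = c • w := by
  set S : Matrix (Fin n) (Fin n) ℝ := B.submatrix id μ₀.succAbove with hS
  have hunit : IsUnit S.det := isUnit_iff_ne_zero.2 hdet
  set T : (Fin (n + 1) → ℝ) →ₗ[ℝ] (Fin n → ℝ) := B.mulVecLin with hT
  have hsurj : Function.Surjective T := by
    intro y
    set z : Fin n → ℝ := S⁻¹.mulVec y with hz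
    set x : Fin (n + 1) → ℝ := Fin.insertNth μ₀ (0 : ℝ) z with hx
    refine ⟨x, ?_⟩
    funext i
    have e1 : T x i = ∑ ν, B i ν * x ν := rfl
    rw [e1, Fin.sum_univ_succAbove _ μ₀]
    have e2 : x μ₀ = 0 := by rw [hx]; simp
    have e3 : ∀ j, x (μ₀.succAbove j) = z j := fun j => by
      rw [hx]; simp
    simp only [e2, e3, mul_zero, zero_add]
    have e4 : ∑ j, B i (μ₀.succAbove j) * z j = (S.mulVec z) i := rfl
    rw [e4, hz, Matrix.mulVec_mulVec, Matrix.mul_nonsing_inv _ hunit, Matrix.one_mulVec]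
  have hrank : finrank ℝ (LinearMap.range T) = n := by
    rw [LinearMap.range_eq_top.2 hsurj, finrank_top, Module.finrank_fin_fun]
  have hrn := LinearMap.finrank_range_add_finrank_ker T
  rw [hrank, Module.finrank_fin_fun] at hrn
  have hker : finrank ℝ (LinearMap.ker T) = 1 := by omega
  have hvK : v ∈ LinearMap.ker T := hv
  have hwK : w ∈ LinearMap.ker T := hw
  have hw0' : (⟨w, hwK⟩ : LinearMap.ker T) ≠ 0 := by
    simp only [ne_eq, Submodule.mk_eq_zero]; exact hw0
  obtain ⟨c, hc⟩ := (finrank_eq_one_iff_of_nonzero' (⟨w, hwK⟩ : LinearMap.ker T) hw0').1 hker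
    ⟨v, hvK⟩
  exact ⟨c, by simpa using congrArg Subtype.val hc.symm⟩

/-- Cofactor row expansion for the matrix with last row replaced by `r`. -/
lemma cof_expand {n : ℕ} (f : Fin (n + 1) → ℤ → ℝ) (m : ℤ) (r : Fin (n + 1) → ℝ) :
    Matrix.det (Matrix.of fun i ν : Fin (n + 1) =>
        if i = Fin.last n then r ν else f ν (m + (i.val : ℤ)))
      = ∑ μ : Fin (n + 1), ((-1 : ℝ) ^ (n + μ.val) * Matrix.det (Matrix.of fun i j : Fin n =>
          f (μ.succAbove j) (m + (i.val : ℤ)))) * r μ := by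
  rw [Matrix.det_succ_row _ (Fin.last n)]
  refine Finset.sum_congr rfl fun μ _ => ?_
  have h1 : ((Fin.last n : Fin (n + 1)) : ℕ) = n := rfl
  rw [h1]
  have h2 : ∀ i j : Fin n,
      (Matrix.of fun i ν : Fin (n + 1) =>
        if i = Fin.last n then r ν else f ν (m + (i.val : ℤ))).submatrix
        (Fin.last n).succAbove μ.succAbove i j
      = f (μ.succAbove j) (m + (i.val : ℤ)) := by
    intro i j
    simp only [Matrix.submatrix_apply, Matrix.of_apply, Fin.succAbove_last]
    rw [if_neg (Fin.castSucc_lt_last i).ne]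
    rfl
  have h3 : Matrix.det ((Matrix.of fun i ν : Fin (n + 1) =>
        if i = Fin.last n then r ν else f ν (m + (i.val : ℤ))).submatrix
        (Fin.last n).succAbove μ.succAbove)
      = Matrix.det (Matrix.of fun i j : Fin n => f (μ.succAbove j) (m + (i.val : ℤ))) := by
    congr 1; ext i j; exact h2 i j
  rw [h3]
  simp only [Matrix.of_apply, if_true]
  ring

theorem christoffel_converse (n : ℕ) (f : Fin (n + 1) → ℤ → ℝ) (m₀ : ℤ) (p : ℕ)
    (hΔ : ∀ m : ℤ, m₀ ≤ m → m ≤ m₀ + p →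
      Matrix.det (Matrix.of fun i ν : Fin (n + 1) => f ν (m + (i.val : ℤ))) = 0)
    (hC : ∀ m : ℤ, m₀ ≤ m → m ≤ m₀ + p → ∃ μ : Fin (n + 1),
      (-1 : ℝ) ^ (n + μ.val) *
        Matrix.det (Matrix.of fun i j : Fin n =>
          f (μ.succAbove j) (m + (i.val : ℤ))) ≠ 0) :
    ∃ A : Fin (n + 1) → ℝ, A ≠ 0 ∧
      ∀ m : ℤ, m₀ ≤ m → m ≤ m₀ + p + n → ∑ μ, A μ * f μ m = 0 := by
  -- the cofactor vector
  set c : ℤ → Fin (n + 1) → ℝ := fun m μ =>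
    (-1 : ℝ) ^ (n + μ.val) * Matrix.det (Matrix.of fun i j : Fin n =>
      f (μ.succAbove j) (m + (i.val : ℤ))) with hc
  -- key: ∑ μ, c m μ * f μ (m + k) = 0 for k < n (duplicated row),
  have hdup : ∀ (m : ℤ) (k : Fin n), ∑ μ, c m μ * f μ (m + (k.val : ℤ)) = 0 := by
    intro m k
    have := cof_expand f m (fun ν => f ν (m + (k.val : ℤ)))
    rw [Matrix.det_zero_of_row_eq (i := Fin.castSucc k) (j := Fin.last n)
      (Fin.castSucc_lt_last k).ne ?_] at this
    · exact this.symm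
    · funext ν
      simp [Matrix.of_apply, (Fin.castSucc_lt_last k).ne]
  -- and = Δ(m) for k = n
  have hlast : ∀ m : ℤ, ∑ μ, c m μ * f μ (m + (n : ℤ)) =
      Matrix.det (Matrix.of fun i ν : Fin (n + 1) => f ν (m + (i.val : ℤ))) := by
    intro m
    have := cof_expand f m (fun ν => f ν (m + (n : ℤ)))
    rw [← this]
    congr 1
    funext i ν
    simp only [Matrix.of_apply]
    by_cases hi : i = Fin.last n
    · subst hi; rw [if_pos rfl]; rfl
    · rw [if_neg hi]
  set A : Fin (n + 1) → ℝ := c m₀ with hA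
  have hm0 : m₀ ≤ m₀ + (p : ℤ) := by omega
  have hA0 : A ≠ 0 := by
    obtain ⟨μ, hμ⟩ := hC m₀ le_rfl hm0
    intro h
    exact hμ (congrFun h μ)
  refine ⟨A, hA0, ?_⟩
  -- main claim by induction on the window size q
  have main : ∀ q : ℕ, q ≤ p → ∀ m : ℤ, m₀ ≤ m → m ≤ m₀ + q + n →
      ∑ μ, A μ * f μ m = 0 := by
    intro q
    induction q with
    | zero =>
      intro _ m hm1 hm2
      -- m = m₀ + k with k ≤ n
      obtain ⟨k, hk, rfl⟩ : ∃ k : ℕ, k ≤ n ∧ m = m₀ + k := by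
        refine ⟨(m - m₀).toNat, ?_, ?_⟩ <;> omega
      rcases lt_or_eq_of_le hk with hkn | hkn
      · exact hdup m₀ ⟨k, hkn⟩
      · subst hkn
        rw [hlast m₀]
        exact hΔ m₀ le_rfl hm0
    | succ q ih =>
      intro hq m hm1 hm2
      have ih' := ih (by omega)
      by_cases hm3 : m ≤ m₀ + q + n
      · exact ih' m hm1 hm3
      · have hmeq : m = (m₀ + q + 1) + (n : ℤ) := by omega
        set m' : ℤ := m₀ + q + 1 with hm'
        have hm'1 : m₀ ≤ m' := by omega
        have hm'2 : m' ≤ m₀ + p := by omega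
        obtain ⟨μ₀, hμ₀⟩ := hC m' hm'1 hm'2
        set B : Matrix (Fin n) (Fin (n + 1)) ℝ :=
          Matrix.of fun i ν => f ν (m' + (i.val : ℤ)) with hB
        have hdetB : (B.submatrix id μ₀.succAbove).det ≠ 0 := by
          intro h
          apply hμ₀
          rw [mul_eq_zero]
          right
          convert h using 2
          rfl
        have hAker : B.mulVec A = 0 := by
          funext i
          have : (B.mulVec A) i = ∑ ν, A ν * f ν (m' + (i.val : ℤ)) := by
            simp only [Matrix.mulVec, dotProduct, hB, Matrix.of_apply]
            exact Finset.sum_congr rfl fun ν _ => mul_comm _ _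
          rw [this]
          exact ih' (m' + i.val) (by omega) (by omega)
        have hcker : B.mulVec (c m') = 0 := by
          funext i
          have : (B.mulVec (c m')) i = ∑ ν, c m' ν * f ν (m' + (i.val : ℤ)) := by
            simp only [Matrix.mulVec, dotProduct, hB, Matrix.of_apply]
            exact Finset.sum_congr rfl fun ν _ => mul_comm _ _
          rw [this]
          exact hdup m' i
        have hc0 : c m' ≠ 0 := by
          intro h
          exact hμ₀ (by rw [show ((-1 : ℝ) ^ (n + μ₀.val) * _) = c m' μ₀ from rfl, h]; rfl)
        obtain ⟨d, hd⟩ := kernel_prop B μ₀ hdetB A (c m') hAker hcker hc0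
        have hsum : ∑ μ, A μ * f μ (m' + (n : ℤ)) =
            d * ∑ μ, c m' μ * f μ (m' + (n : ℤ)) := by
          rw [Finset.mul_sum]
          refine Finset.sum_congr rfl fun μ _ => ?_
          have : A μ = d * c m' μ := by rw [hd]; simp [smul_eq_mul]
          rw [this]; ring
        rw [hmeq, hsum, hlast m', hΔ m' hm'1 hm'2, mul_zero]
  intro m hm1 hm2
  exact main p le_rfl m hm1 (by omega)
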